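/- Applying the two moves — (i) if λ_i ≥ λ_{i+1}+2 and λ_j ≥ λ_{j+1}+2 for some i < j, replace λ_i by λ_i−1 and λ_{j+1} by λ_{j+1}+1; (ii) if λ_i ≥ λ_{i+1}+3, replace λ_i by λ_i−1 and λ_{i+1} by λ_{i+1}+1 — repeatedly to any strict partition of n eventually terminates, and the terminal strict partitions are exactly those of the form (s+1, s, ..., s−d+2, s−d, s−d−1, ..., 2, 1) where n = binom(s+1,2) + d with 0 ≤ d ≤ s. -/

import Mathlib

/-- `f` is a strict partition of `n`. -/
def IsStrictPartition (n : ℕ) (f : ℕ → ℕ) : Prop :=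
  (∀ i, f (i + 1) ≤ f i) ∧ (∀ i, f (i + 1) ≠ 0 → f (i + 1) < f i) ∧
    (∀ i, n ≤ i → f i = 0) ∧ ∑ i ∈ Finset.range n, f i = n

/-- Move (i): if `λ_i ≥ λ_{i+1}+2` and `λ_j ≥ λ_{j+1}+2` for some `i < j`, replace
`λ_i` by `λ_i−1` and `λ_{j+1}` by `λ_{j+1}+1`. -/
def MoveI (f g : ℕ → ℕ) : Prop :=
  ∃ i j, i < j ∧ f (i + 1) + 2 ≤ f i ∧ f (j + 1) + 2 ≤ f j ∧
    g = fun l => if l = i then f i - 1 else if l = j + 1 then f (j + 1) + 1 else f l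

/-- Move (ii): if `λ_i ≥ λ_{i+1}+3`, replace `λ_i` by `λ_i−1` and `λ_{i+1}` by `λ_{i+1}+1`. -/
def MoveII (f g : ℕ → ℕ) : Prop :=
  ∃ i, f (i + 1) + 3 ≤ f i ∧
    g = fun l => if l = i then f i - 1 else if l = i + 1 then f (i + 1) + 1 else f l

def Move (f g : ℕ → ℕ) : Prop := MoveI f g ∨ MoveII f g

/-- The strict partition `(s+1, s, …, s−d+2, s−d, s−d−1, …, 2, 1)` (the value `s−d+1`
is skipped; for `d = 0` this is `(s, …, 1)`). -/
def minPart (s d : ℕ) : ℕ → ℕ := fun i =>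
  if i < d then s + 1 - i else if i < s then s - i else 0


lemma key_lt {n : ℕ} {f : ℕ → ℕ} (hmono : ∀ i, f (i + 1) ≤ f i)
    (hsupp : ∀ i, n ≤ i → f i = 0)
    (hsum : ∑ i ∈ Finset.range n, f i = n) {j : ℕ} (hj : 2 ≤ f j) :
    j + 1 < n := by
  by_contra hc
  push_neg at hc
  have hjn : j < n := by
    by_contra h'
    push_neg at h'
    have := hsupp j h'
    omega
  have hge : ∀ i ∈ Finset.range n, 2 ≤ f i := by
    intro i hi
    rw [Finset.mem_range] at hi
    exact le_trans hj (antitone_nat_of_succ_le hmono (by omega))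
  have h2n : 2 * n ≤ ∑ i ∈ Finset.range n, f i := by
    calc 2 * n = ∑ _i ∈ Finset.range n, 2 := by
          rw [Finset.sum_const, Finset.card_range]; ring
      _ ≤ _ := Finset.sum_le_sum hge
  omega

lemma step {n : ℕ} {f g : ℕ → ℕ} {a j : ℕ}
    (hmono : ∀ i, f (i + 1) ≤ f i) (hsupp : ∀ i, n ≤ i → f i = 0)
    (hsum : ∑ i ∈ Finset.range n, f i = n)
    (haj : a ≤ j)
    (h1 : f (a + 1) + 2 ≤ f a) (h2 : f (j + 1) + 2 ≤ f j)
    (h3 : j = a → f (a + 1) + 3 ≤ f a)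
    (hg : g = fun l => if l = a then f a - 1 else if l = j + 1 then f (j + 1) + 1 else f l) :
    (∀ i, g (i + 1) ≤ g i) ∧ (∀ i, n ≤ i → g i = 0) ∧
      (∑ i ∈ Finset.range n, g i = n) ∧
      (∑ i ∈ Finset.range n, i * f i) + 1 ≤ ∑ i ∈ Finset.range n, i * g i := by
  have gval_a : g a = f a - 1 := by rw [hg]; simp
  have gval_j1 : g (j + 1) = f (j + 1) + 1 := by
    have hne : (j + 1 : ℕ) ≠ a := by omega
    simp [hg, hne]
  have gval_other : ∀ l, l ≠ a → l ≠ j + 1 → g l = f l := by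
    intro l h h'; rw [hg]; simp only; rw [if_neg h, if_neg h']
  have hjn : j + 1 < n := key_lt hmono hsupp hsum (by omega)
  have han : a < n := by omega
  refine ⟨?_, ?_, ?_, ?_⟩
  · -- monotone
    intro i
    by_cases hia : i = a
    · rw [hia, gval_a]
      rcases eq_or_ne (a + 1) (j + 1) with he | he
      · rw [he, gval_j1]
        have h4 := h3 (by omega)
        rw [he] at h4
        omega
      · rw [gval_other (a + 1) (by omega) he]
        omega
    · by_cases hij1 : i = j + 1
      · rw [hij1, gval_j1, gval_other (j + 1 + 1) (by omega) (by omega)]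
        have := hmono (j + 1); omega
      · rw [gval_other i hia hij1]
        rcases eq_or_ne (i + 1) a with he | he
        · have hm := hmono i
          rw [he] at hm
          rw [he, gval_a]
          omega
        · rcases eq_or_ne (i + 1) (j + 1) with he' | he'
          · have hij : i = j := by omega
            subst hij
            rw [he', gval_j1]
            omega
          · rw [gval_other (i + 1) he he']
            exact hmono i
  · intro i hni
    rw [gval_other i (by omega) (by omega)]
    exact hsupp i hni
  · have key : ∀ l, g l + (if l = a then 1 else 0) = f l + (if l = j + 1 then 1 else 0) := by
      intro l
      by_cases h : l = a
      · rw [h, gval_a, if_pos rfl, if_neg (show a ≠ j + 1 by omega)]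
        omega
      · by_cases h' : l = j + 1
        · rw [h'] at h ⊢
          rw [gval_j1, if_neg h, if_pos rfl]
        · rw [gval_other l h h', if_neg h, if_neg h']
    have hsg : (∑ i ∈ Finset.range n, g i) + ∑ i ∈ Finset.range n, (if i = a then 1 else 0)
        = (∑ i ∈ Finset.range n, f i) + ∑ i ∈ Finset.range n, (if i = j + 1 then 1 else 0) := by
      rw [← Finset.sum_add_distrib, ← Finset.sum_add_distrib]
      exact Finset.sum_congr rfl (fun i _ => key i)
    have ha' : ∑ i ∈ Finset.range n, (if i = a then (1:ℕ) else 0) = 1 := by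
      rw [Finset.sum_ite_eq' (Finset.range n) a (fun _ => (1:ℕ))]
      rw [if_pos (Finset.mem_range.mpr han)]
    have hb' : ∑ i ∈ Finset.range n, (if i = j + 1 then (1:ℕ) else 0) = 1 := by
      rw [Finset.sum_ite_eq' (Finset.range n) (j + 1) (fun _ => (1:ℕ))]
      rw [if_pos (Finset.mem_range.mpr hjn)]
    omega
  · have key : ∀ l, l * g l + (if l = a then a else 0)
        = l * f l + (if l = j + 1 then j + 1 else 0) := by
      intro l
      by_cases h : l = a
      · rw [h, gval_a, if_pos rfl, if_neg (show a ≠ j + 1 by omega)]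
        obtain ⟨c, hc⟩ : ∃ c, f a = c + 1 := ⟨f a - 1, by omega⟩
        rw [hc, Nat.add_sub_cancel]
        ring
      · by_cases h' : l = j + 1
        · rw [h'] at h ⊢
          rw [gval_j1, if_neg h, if_pos rfl]
          ring
        · rw [gval_other l h h', if_neg h, if_neg h']
    have hsg : (∑ i ∈ Finset.range n, i * g i) + ∑ i ∈ Finset.range n, (if i = a then a else 0)
        = (∑ i ∈ Finset.range n, i * f i)
          + ∑ i ∈ Finset.range n, (if i = j + 1 then j + 1 else 0) := by
      rw [← Finset.sum_add_distrib, ← Finset.sum_add_distrib]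
      exact Finset.sum_congr rfl (fun i _ => key i)
    have ha' : ∑ i ∈ Finset.range n, (if i = a then a else 0) = a := by
      rw [Finset.sum_ite_eq' (Finset.range n) a (fun _ => a)]
      rw [if_pos (Finset.mem_range.mpr han)]
    have hb' : ∑ i ∈ Finset.range n, (if i = j + 1 then j + 1 else 0) = j + 1 := by
      rw [Finset.sum_ite_eq' (Finset.range n) (j + 1) (fun _ => j + 1)]
      rw [if_pos (Finset.mem_range.mpr hjn)]
    omega


lemma minPart_no3 {s d : ℕ} (hds : d ≤ s) (i : ℕ) :
    minPart s d i ≤ minPart s d (i + 1) + 2 := by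
  simp only [minPart]
  split_ifs <;> omega

lemma minPart_diff {s d i : ℕ} (hds : d ≤ s)
    (h : minPart s d (i + 1) + 2 ≤ minPart s d i) : i + 1 = d := by
  simp only [minPart] at h
  split_ifs at h <;> omega

lemma sum_minPart {s d m : ℕ} (hds : d ≤ s) (hsm : s ≤ m) :
    ∑ i ∈ Finset.range m, minPart s d i = s * (s + 1) / 2 + d := by
  have hdec : ∀ i, minPart s d i
      = (if i < s then s - i else 0) + (if i < d then 1 else 0) := by
    intro i; simp only [minPart]; split_ifs <;> omega
  simp only [hdec]
  rw [Finset.sum_add_distrib]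
  have h1 : ∑ i ∈ Finset.range m, (if i < s then s - i else 0)
      = ∑ i ∈ Finset.range s, (s - i) := by
    rw [← Finset.sum_subset (Finset.range_subset_range.mpr hsm)
      (fun x _ hx => by rw [Finset.mem_range] at hx; rw [if_neg (by omega)])]
    exact Finset.sum_congr rfl (fun i hi => by
      rw [Finset.mem_range] at hi; rw [if_pos hi])
  have h2 : ∑ i ∈ Finset.range m, (if i < d then (1:ℕ) else 0) = d := by
    rw [← Finset.sum_subset (Finset.range_subset_range.mpr (le_trans hds hsm))
      (fun x _ hx => by rw [Finset.mem_range] at hx; rw [if_neg (by omega)])]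
    have hc : ∀ i ∈ Finset.range d, (if i < d then (1:ℕ) else 0) = 1 :=
      fun i hi => if_pos (Finset.mem_range.mp hi)
    rw [Finset.sum_congr rfl hc]
    simp
  have h3 : ∑ j ∈ Finset.range s, (s - j) = ∑ j ∈ Finset.range s, (j + 1) := by
    rw [← Finset.sum_range_reflect (fun i => i + 1) s]
    exact Finset.sum_congr rfl (fun j hj => by rw [Finset.mem_range] at hj; omega)
  have h4 : ∑ j ∈ Finset.range (s + 1), j = ∑ j ∈ Finset.range s, (j + 1) := by
    rw [Finset.sum_range_succ' (fun j => j) s, add_zero]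
  have h5 := Finset.sum_range_id_mul_two (s + 1)
  have h6 : (∑ i ∈ Finset.range (s + 1), i) * 2 = s * (s + 1) := by
    rw [h5, Nat.add_sub_cancel, Nat.mul_comm]
  omega
theorem stmt5 (n : ℕ) :
    (∀ F : ℕ → ℕ → ℕ, IsStrictPartition n (F 0) → ¬ (∀ k, Move (F k) (F (k + 1)))) ∧
    (∀ f : ℕ → ℕ, IsStrictPartition n f →
      ((∀ g, ¬ Move f g) ↔ ∃ s d, d ≤ s ∧ n = s * (s + 1) / 2 + d ∧ f = minPart s d)) := by
  constructor
  · -- termination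
    intro F hF0 hmv
    obtain ⟨hm0, _, hs0, hsum0⟩ := hF0
    have inv : ∀ k, (∀ i, F k (i + 1) ≤ F k i) ∧ (∀ i, n ≤ i → F k i = 0) ∧
        (∑ i ∈ Finset.range n, F k i = n) ∧
        (∑ i ∈ Finset.range n, i * F 0 i) + k ≤ ∑ i ∈ Finset.range n, i * F k i := by
      intro k
      induction k with
      | zero => exact ⟨hm0, hs0, hsum0, by omega⟩
      | succ k ih =>
        obtain ⟨hm, hs, hsum', hw⟩ := ih
        have hstep : (∀ i, F (k + 1) (i + 1) ≤ F (k + 1) i) ∧ (∀ i, n ≤ i → F (k + 1) i = 0) ∧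
            (∑ i ∈ Finset.range n, F (k + 1) i = n) ∧
            (∑ i ∈ Finset.range n, i * F k i) + 1 ≤ ∑ i ∈ Finset.range n, i * F (k + 1) i := by
          rcases hmv k with ⟨i, j, hij, h1, h2, hg⟩ | ⟨i, h1, hg⟩
          · exact step hm hs hsum' (le_of_lt hij) h1 h2
              (fun h => absurd h (by omega)) hg
          · exact step hm hs hsum' le_rfl (by omega) (by omega) (fun _ => h1) hg
        exact ⟨hstep.1, hstep.2.1, hstep.2.2.1, by omega⟩
    have hbound : ∀ k, ∑ i ∈ Finset.range n, i * F k i ≤ n * n := by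
      intro k
      obtain ⟨_, _, hsum', _⟩ := inv k
      calc ∑ i ∈ Finset.range n, i * F k i
          ≤ ∑ i ∈ Finset.range n, n * F k i :=
            Finset.sum_le_sum (fun i hi =>
              Nat.mul_le_mul_right _ (le_of_lt (Finset.mem_range.mp hi)))
        _ = n * n := by rw [← Finset.mul_sum, hsum']
    have hA := (inv (n * n + 1)).2.2.2
    have hB := hbound (n * n + 1)
    omega
  · intro f hf
    obtain ⟨hmono, hstrict, hsupp, hsum⟩ := hf
    constructor
    · -- terminal → minPart
      intro h
      have hA : ∀ i, f i ≤ f (i + 1) + 2 := by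
        intro i
        by_contra hc
        push_neg at hc
        exact h _ (Or.inr ⟨i, by omega, rfl⟩)
      have hB : ∀ i j, i < j → f (i + 1) + 2 ≤ f i → f (j + 1) + 2 ≤ f j → False :=
        fun i j h1 h2 h3 => h _ (Or.inl ⟨i, j, h1, h2, h3, rfl⟩)
      have hex : ∃ l, f l = 0 := ⟨n, hsupp n le_rfl⟩
      set L := Nat.find hex with hLdef
      have hL0 : f L = 0 := Nat.find_spec hex
      have hLmin : ∀ m, m < L → f m ≠ 0 := fun m hm => Nat.find_min hex hm
      have hLn : L ≤ n := Nat.find_min' hex (hsupp n le_rfl)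
      have hzero : ∀ i, L ≤ i → f i = 0 := fun i hi =>
        Nat.le_zero.mp (hL0 ▸ antitone_nat_of_succ_le hmono hi)
      by_cases hp : ∃ p, p < L ∧ f (p + 1) + 2 ≤ f p
      · obtain ⟨p, hpL, hpd⟩ := hp
        have huniq : ∀ i, i ≠ p → f i ≤ f (i + 1) + 1 := by
          intro i hip
          by_contra hc
          push_neg at hc
          rcases lt_or_gt_of_ne hip with h' | h'
          · exact hB i p h' (by omega) hpd
          · exact hB p i h' hpd (by omega)
        have hval : ∀ k, k ≤ L → f (L - k) = k + (if L - k ≤ p then 1 else 0) := by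
          intro k
          induction k with
          | zero =>
            intro _
            simp only [Nat.sub_zero, hL0]
            rw [if_neg (by omega)]
          | succ k ih =>
            intro hk
            have hik := ih (by omega)
            have hi1 : L - (k + 1) + 1 = L - k := by omega
            have hiL : L - (k + 1) < L := by omega
            rw [← hi1] at hik
            set i := L - (k + 1) with hidef
            rcases eq_or_ne i p with hipe | hip
            · have hup := hA p
              rw [← hipe] at hup hpd ⊢
              have hfi : f i = f (i + 1) + 2 := by omega
              rw [hfi, hik]
              split_ifs <;> omega
            · have hup := huniq i hip
              have hlow : f (i + 1) + 1 ≤ f i := by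
                rcases Nat.eq_zero_or_pos (f (i + 1)) with h0 | h0
                · have := hLmin i hiL
                  omega
                · exact hstrict i (by omega)
              have hfi : f i = f (i + 1) + 1 := by omega
              rw [hfi, hik]
              split_ifs <;> omega
        have hfeq : f = minPart L (p + 1) := by
          funext i
          rcases lt_or_ge i L with hiL | hiL
          · have hv := hval (L - i) (by omega)
            have hLi : L - (L - i) = i := by omega
            rw [hLi] at hv
            rcases le_or_gt i p with hip | hip
            · rw [if_pos hip] at hv
              simp only [minPart]
              split_ifs <;> omega
            · rw [if_neg (by omega)] at hv
              simp only [minPart]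
              split_ifs <;> omega
          · rw [hzero i hiL]
            simp only [minPart]
            split_ifs <;> omega
        exact ⟨L, p + 1, by omega, by rw [← hsum, hfeq, sum_minPart (by omega) hLn], hfeq⟩
      · push_neg at hp
        have hval : ∀ k, k ≤ L → f (L - k) = k := by
          intro k
          induction k with
          | zero => simpa using hL0
          | succ k ih =>
            intro hk
            have hik := ih (by omega)
            have hi1 : L - (k + 1) + 1 = L - k := by omega
            have hiL : L - (k + 1) < L := by omega
            rw [← hi1] at hik
            set i := L - (k + 1) with hidef
            have hup : f i ≤ f (i + 1) + 1 := by
              have := hp i hiL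
              omega
            have hlow : f (i + 1) + 1 ≤ f i := by
              rcases Nat.eq_zero_or_pos (f (i + 1)) with h0 | h0
              · have := hLmin i hiL
                omega
              · exact hstrict i (by omega)
            omega
        have hfeq : f = minPart L 0 := by
          funext i
          rcases lt_or_ge i L with hiL | hiL
          · have hv := hval (L - i) (by omega)
            have hLi : L - (L - i) = i := by omega
            rw [hLi] at hv
            simp only [minPart]
            split_ifs <;> omega
          · rw [hzero i hiL]
            simp only [minPart]
            split_ifs <;> omega
        exact ⟨L, 0, Nat.zero_le L,
          by rw [← hsum, hfeq, sum_minPart (Nat.zero_le L) hLn], hfeq⟩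
    · -- minPart → terminal
      rintro ⟨s, d, hds, hn, rfl⟩ g hmv
      rcases hmv with ⟨i, j, hij, h1, h2, _⟩ | ⟨i, h1, _⟩
      · have hi := minPart_diff hds h1
        have hj := minPart_diff hds h2
        omega
      · have := minPart_no3 hds i
        omega
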